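/- arXiv:1705.07009 — 3 statements merged into one kernel-verified Lean document; each statement's English description precedes it below -/
import Mathlib

section
/- Let γ>0 and t₀∈ℝ. Let H:[t₀,∞)→ℝ be C¹ with H(t)>0 for all t, and let Σ, ρ, S̄:[t₀,∞)→ℝ be continuous nonnegative functions such that for all t≥t₀: H'(t) = −½Σ(t) − (1/6)S̄(t) − ½ρ(t), and 9H(t)² = (3/2)Σ(t) + 3ρ(t) + 9γ². If H(t₀) < √(7/6)·γ, then for all t≥t₀ one has H(t)≥γ and F(t) := Σ(t)/(4H(t)²) < 1/4. -/
/-- **ODE content of the Hamiltonian-constraint argument** (Lemma on the scaled shear `F`):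
if `H' = -Σ/2 - S̄/6 - ρ/2`, `9H² = (3/2)Σ + 3ρ + 9γ²`, and `H(t₀) < √(7/6)γ`,
then `H ≥ γ` and `F = Σ/(4H²) < 1/4` on `[t₀,∞)`. -/
theorem shear_bound_of_constraint
    (γ t₀ : ℝ) (hγ : 0 < γ) (H Sig rho Sbar : ℝ → ℝ)
    (hHpos : ∀ t ∈ Set.Ici t₀, 0 < H t)
    (hSig : ∀ t ∈ Set.Ici t₀, 0 ≤ Sig t)
    (hrho : ∀ t ∈ Set.Ici t₀, 0 ≤ rho t)
    (hSbar : ∀ t ∈ Set.Ici t₀, 0 ≤ Sbar t)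
    (hSigc : ContinuousOn Sig (Set.Ici t₀))
    (hrhoc : ContinuousOn rho (Set.Ici t₀))
    (hSbarc : ContinuousOn Sbar (Set.Ici t₀))
    (hH' : ∀ t ∈ Set.Ici t₀,
      HasDerivWithinAt H (-(1/2) * Sig t - (1/6) * Sbar t - (1/2) * rho t) (Set.Ici t₀) t)
    (hcon : ∀ t ∈ Set.Ici t₀, 9 * (H t)^2 = (3/2) * Sig t + 3 * rho t + 9 * γ^2)
    (hH0 : H t₀ < Real.sqrt (7/6) * γ) :
    ∀ t ∈ Set.Ici t₀, γ ≤ H t ∧ Sig t / (4 * (H t)^2) < 1/4 := by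
  -- H is antitone on [t₀, ∞)
  have hanti : AntitoneOn H (Set.Ici t₀) := by
    apply antitoneOn_of_deriv_nonpos (convex_Ici t₀)
    · exact fun t ht => (hH' t ht).continuousWithinAt
    · intro t ht
      rw [interior_Ici] at ht
      exact ((hH' t (Set.mem_Ici.mpr ht.le)).hasDerivAt (Ici_mem_nhds ht)).differentiableAt.differentiableWithinAt
    · intro t ht
      rw [interior_Ici] at ht
      rw [((hH' t (Set.mem_Ici.mpr ht.le)).hasDerivAt (Ici_mem_nhds ht)).deriv]
      have h1 := hSig t (Set.mem_Ici.mpr ht.le)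
      have h2 := hrho t (Set.mem_Ici.mpr ht.le)
      have h3 := hSbar t (Set.mem_Ici.mpr ht.le)
      linarith
  intro t ht
  have hHt := hHpos t ht
  have hct := hcon t ht
  have hrt := hrho t ht
  have hst := hSig t ht
  -- H t < √(7/6) γ
  have hb : H t < Real.sqrt (7/6) * γ :=
    lt_of_le_of_lt (hanti Set.self_mem_Ici ht ht) hH0
  have hsq : (Real.sqrt (7/6) * γ)^2 = (7/6) * γ^2 := by
    rw [mul_pow, Real.sq_sqrt (by norm_num : (7:ℝ)/6 ≥ 0)]
  have hH2 : (H t)^2 < (7/6) * γ^2 := by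
    have : (H t)^2 < (Real.sqrt (7/6) * γ)^2 := by
      apply pow_lt_pow_left₀ hb hHt.le
      norm_num
    linarith [this, hsq.le, hsq.ge]
  have hγle : γ ≤ H t := by nlinarith
  refine ⟨hγle, ?_⟩
  rw [div_lt_iff₀ (by positivity)]
  nlinarith
end

section
/- For every c₀≥1 there is a constant C>0, depending only on c₀, with the following property. Let R>0 and let g be a symmetric positive-definite real 3×3 matrix such that (1/c₀)R^{−2}|v|² ≤ vᵀg^{−1}v ≤ c₀R^{−2}|v|² for all v∈ℝ³. For x∈ℝ³ write x⁰=√(1+xᵀg^{−1}x). Then for all p,q,p',q'∈ℝ³ satisfying the collision conservation laws p'+q'=p+q and p'⁰+q'⁰=p⁰+q⁰, one has √(1+|p|²) ≤ C·√(1+|p'|²)·√(1+|q'|²). -/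
open Matrix Real

lemma dot_self_nonneg' (v : Fin 3 → ℝ) : 0 ≤ v ⬝ᵥ v := by
  simp only [dotProduct]
  exact Finset.sum_nonneg fun i _ => mul_self_nonneg _

lemma dot_cs (a b : Fin 3 → ℝ) : a ⬝ᵥ b ≤ Real.sqrt (a ⬝ᵥ a) * Real.sqrt (b ⬝ᵥ b) := by
  have h2 : (a ⬝ᵥ b)^2 ≤ (a ⬝ᵥ a) * (b ⬝ᵥ b) := by
    simpa [dotProduct, sq] using Finset.sum_mul_sq_le_sq_mul_sq Finset.univ a b
  calc a ⬝ᵥ b ≤ |a ⬝ᵥ b| := le_abs_self _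
    _ = Real.sqrt ((a ⬝ᵥ b)^2) := (Real.sqrt_sq_eq_abs _).symm
    _ ≤ Real.sqrt ((a ⬝ᵥ a) * (b ⬝ᵥ b)) := Real.sqrt_le_sqrt h2
    _ = _ := Real.sqrt_mul (dot_self_nonneg' a) _

lemma dot_sqrt_triangle (a b : Fin 3 → ℝ) :
    Real.sqrt ((a + b) ⬝ᵥ (a + b)) ≤ Real.sqrt (a ⬝ᵥ a) + Real.sqrt (b ⬝ᵥ b) := by
  have hexp : (a + b) ⬝ᵥ (a + b) = a ⬝ᵥ a + 2 * (a ⬝ᵥ b) + b ⬝ᵥ b := by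
    simp [add_dotProduct, dotProduct_add, dotProduct_comm b a]; ring
  have hcs := dot_cs a b
  have ha := Real.sq_sqrt (dot_self_nonneg' a)
  have hb := Real.sq_sqrt (dot_self_nonneg' b)
  have h : (a + b) ⬝ᵥ (a + b) ≤ (Real.sqrt (a ⬝ᵥ a) + Real.sqrt (b ⬝ᵥ b))^2 := by
    rw [hexp]; nlinarith
  calc Real.sqrt ((a + b) ⬝ᵥ (a + b)) ≤ Real.sqrt ((Real.sqrt (a ⬝ᵥ a) + Real.sqrt (b ⬝ᵥ b))^2) :=
        Real.sqrt_le_sqrt h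
    _ = _ := Real.sqrt_sq (by positivity)


lemma le_of_sq_le_sq' {x y : ℝ} (hy : 0 ≤ y) (h : x^2 ≤ y^2) : x ≤ y := by
  calc x ≤ |x| := le_abs_self x
    _ = Real.sqrt (x^2) := (Real.sqrt_sq_eq_abs x).symm
    _ ≤ Real.sqrt (y^2) := Real.sqrt_le_sqrt h
    _ = y := Real.sqrt_sq hy

lemma sqrt_one_add_sq_superadd {a b : ℝ} (ha : 0 ≤ a) (hb : 0 ≤ b) :
    Real.sqrt (1 + a^2) + Real.sqrt (1 + b^2) ≤ 1 + Real.sqrt (1 + (a+b)^2) := by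
  set s1 := Real.sqrt (1 + a^2) with hs1
  set s2 := Real.sqrt (1 + b^2) with hs2
  set s3 := Real.sqrt (1 + (a+b)^2) with hs3
  have h1 : s1^2 = 1 + a^2 := Real.sq_sqrt (by positivity)
  have h2 : s2^2 = 1 + b^2 := Real.sq_sqrt (by positivity)
  have h3 : s3^2 = 1 + (a+b)^2 := Real.sq_sqrt (by positivity)
  have h1' : 1 ≤ s1 := (Real.le_sqrt zero_le_one (by positivity)).mpr (by nlinarith)
  have h2' : 1 ≤ s2 := (Real.le_sqrt zero_le_one (by positivity)).mpr (by nlinarith)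
  have h3' : 1 ≤ s3 := (Real.le_sqrt zero_le_one (by positivity)).mpr (by nlinarith)
  have habs3 : 0 ≤ a * b * s3 := by positivity
  have hk : s1 * s2 ≤ a*b + s3 := by
    have hy : (0:ℝ) ≤ a*b + s3 := by positivity
    have hm : (s1*s2)^2 = (1+a^2)*(1+b^2) := by rw [mul_pow, h1, h2]
    have hsq : (s1*s2)^2 ≤ (a*b + s3)^2 := by nlinarith [hm, habs3]
    exact le_of_sq_le_sq' hy hsq
  nlinarith [sq_nonneg (s1 + s2 - 1 - s3)]

-- key inequality: energy conservation forces A ≤ 2t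
set_option maxHeartbeats 1000000 in
lemma key_ineq {A t : ℝ} (ht : 0 ≤ t) (htA : t ≤ A)
    (h : Real.sqrt (1 + A^2) + Real.sqrt (1 + (A - t)^2) ≤ 1 + Real.sqrt (1 + t^2)) :
    A ≤ 2 * t := by
  set s1 := Real.sqrt (1 + A^2) with hs1
  set s2 := Real.sqrt (1 + (A - t)^2) with hs2
  set s3 := Real.sqrt (1 + t^2) with hs3
  have h1 : s1^2 = 1 + A^2 := Real.sq_sqrt (by positivity)
  have h2 : s2^2 = 1 + (A - t)^2 := Real.sq_sqrt (by positivity)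
  have h3 : s3^2 = 1 + t^2 := Real.sq_sqrt (by positivity)
  have h1' : 1 ≤ s1 := (Real.le_sqrt zero_le_one (by positivity)).mpr (by nlinarith)
  have h2' : 1 ≤ s2 := (Real.le_sqrt zero_le_one (by positivity)).mpr (by nlinarith)
  have h3' : 1 ≤ s3 := (Real.le_sqrt zero_le_one (by positivity)).mpr (by nlinarith)
  -- s3 ≤ 1 + t²/2
  have h3u : s3 ≤ 1 + t^2/2 := by
    nlinarith [sq_nonneg (s3 - 1 - t^2/2)]
  -- midpoint: s1 + s2 ≥ 2 √(1+(A-t/2)²)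
  set s4 := Real.sqrt (1 + (A - t/2)^2) with hs4
  have h4 : s4^2 = 1 + (A - t/2)^2 := Real.sq_sqrt (by positivity)
  have h4' : 0 ≤ s4 := Real.sqrt_nonneg _
  have hmid : 2 * s4 ≤ s1 + s2 := by
    -- need s1*s2 ≥ 1 + A*(A-t)
    have hprod : 1 + A*(A - t) ≤ s1 * s2 := by
      have hm : (s1*s2)^2 = (1+A^2)*(1+(A-t)^2) := by rw [mul_pow, h1, h2]
      have hsq : (1 + A*(A-t))^2 ≤ (s1*s2)^2 := by nlinarith [hm, sq_nonneg t]
      exact le_of_sq_le_sq' (by positivity) hsq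
    have hsq2 : (2*s4)^2 ≤ (s1+s2)^2 := by nlinarith [hprod, h1, h2, h4]
    exact le_of_sq_le_sq' (by positivity) hsq2
  -- so 2 s4 ≤ 1 + s3 ≤ 2 + t²/2, square
  have hfin : 2 * s4 ≤ 2 + t^2/2 := by linarith
  -- 4(1+(A-t/2)²) ≤ (2+t²/2)² ... but this gives t⁴ terms; use instead:
  -- 4 s4² ≤ (1+s3)² = 1 + 2 s3 + s3² ≤ 1 + 2(1+t²/2) + 1 + t² = 4 + 2t²
  have h5 : 4 * s4^2 ≤ 4 + 2*t^2 := by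
    have : 2 * s4 ≤ 1 + s3 := by linarith
    nlinarith
  -- (A - t/2)² ≤ t²/2 ⇒ A ≤ t/2 + t/√2 ≤ 2t
  have h6 : (A - t/2)^2 ≤ t^2/2 := by nlinarith [h4, h5]
  nlinarith [h6, ht, sq_nonneg (A - 2*t), mul_nonneg ht ht]

lemma two_mul_helper {a b : ℝ} : (a+b)^2 ≤ 2*(a^2+b^2) := by nlinarith [sq_nonneg (a-b)]

set_option maxHeartbeats 1000000 in
/-- **Collision estimate `⟨p⟩ ≤ C⟨p'⟩⟨q'⟩`**: for every `c₀ ≥ 1` there is `C > 0`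
(depending only on `c₀`) such that whenever `R > 0` and `g` is a symmetric
positive-definite metric with `(1/c₀)R⁻²|v|² ≤ vᵀg⁻¹v ≤ c₀R⁻²|v|²`, any momenta
`p, q, p', q'` obeying the conservation laws `p' + q' = p + q` and
`p'⁰ + q'⁰ = p⁰ + q⁰` (with `x⁰ = √(1 + xᵀg⁻¹x)`) satisfy
`√(1+|p|²) ≤ C √(1+|p'|²) √(1+|q'|²)`. -/
theorem weight_le_of_collision (c₀ : ℝ) (hc₀ : 1 ≤ c₀) :
    ∃ C > 0, ∀ (R : ℝ), 0 < R → ∀ g : Matrix (Fin 3) (Fin 3) ℝ, g.IsSymm → g.PosDef →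
      (∀ v : Fin 3 → ℝ,
          (v ⬝ᵥ v) / (c₀ * R^2) ≤ v ⬝ᵥ (g⁻¹ *ᵥ v)
          ∧ v ⬝ᵥ (g⁻¹ *ᵥ v) ≤ c₀ * (v ⬝ᵥ v) / R^2) →
      ∀ p q p' q' : Fin 3 → ℝ,
        p' + q' = p + q →
        Real.sqrt (1 + p' ⬝ᵥ (g⁻¹ *ᵥ p')) + Real.sqrt (1 + q' ⬝ᵥ (g⁻¹ *ᵥ q'))
          = Real.sqrt (1 + p ⬝ᵥ (g⁻¹ *ᵥ p)) + Real.sqrt (1 + q ⬝ᵥ (g⁻¹ *ᵥ q)) →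
        Real.sqrt (1 + p ⬝ᵥ p)
          ≤ C * Real.sqrt (1 + p' ⬝ᵥ p') * Real.sqrt (1 + q' ⬝ᵥ q') := by
  have hc₀0 : (0:ℝ) < c₀ := lt_of_lt_of_le one_pos hc₀
  refine ⟨3 * c₀, by positivity, ?_⟩
  intro R hR g hgs hgpd hbounds p q p' q' hmom hen
  have hM : (g⁻¹).PosDef := hgpd.inv
  have hMsd : (g⁻¹).PosSemidef := hM.posSemidef
  open scoped MatrixOrder in
  set S := CFC.sqrt (g⁻¹) with hS
  open scoped MatrixOrder in
  have hSsd : S.PosSemidef := (CFC.sqrt_nonneg _).posSemidef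
  have hSsymm : Sᵀ = S := by
    have h := hSsd.1
    rwa [Matrix.IsHermitian, Matrix.conjTranspose_eq_transpose_of_trivial] at h
  have hQ : ∀ v : Fin 3 → ℝ, v ⬝ᵥ (g⁻¹ *ᵥ v) = (S *ᵥ v) ⬝ᵥ (S *ᵥ v) := by
    intro v
    open scoped MatrixOrder in
    conv_lhs => rw [← CFC.sqrt_mul_sqrt_self (g⁻¹) hMsd.nonneg, ← hS, ← Matrix.mulVec_mulVec,
      Matrix.dotProduct_mulVec, ← Matrix.mulVec_transpose, hSsymm]
  -- notation
  set A := Real.sqrt (p ⬝ᵥ (g⁻¹ *ᵥ p)) with hA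
  set B := Real.sqrt (q ⬝ᵥ (g⁻¹ *ᵥ q)) with hB
  set a' := Real.sqrt (p' ⬝ᵥ (g⁻¹ *ᵥ p')) with ha'
  set b' := Real.sqrt (q' ⬝ᵥ (g⁻¹ *ᵥ q')) with hb'
  have hQp : 0 ≤ p ⬝ᵥ (g⁻¹ *ᵥ p) := by rw [hQ]; exact dot_self_nonneg' _
  have hQq : 0 ≤ q ⬝ᵥ (g⁻¹ *ᵥ q) := by rw [hQ]; exact dot_self_nonneg' _
  have hQp' : 0 ≤ p' ⬝ᵥ (g⁻¹ *ᵥ p') := by rw [hQ]; exact dot_self_nonneg' _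
  have hQq' : 0 ≤ q' ⬝ᵥ (g⁻¹ *ᵥ q') := by rw [hQ]; exact dot_self_nonneg' _
  have hA2 : A^2 = p ⬝ᵥ (g⁻¹ *ᵥ p) := Real.sq_sqrt hQp
  have hB2 : B^2 = q ⬝ᵥ (g⁻¹ *ᵥ q) := Real.sq_sqrt hQq
  have ha2 : a'^2 = p' ⬝ᵥ (g⁻¹ *ᵥ p') := Real.sq_sqrt hQp'
  have hb2 : b'^2 = q' ⬝ᵥ (g⁻¹ *ᵥ q') := Real.sq_sqrt hQq'
  have hA0 : 0 ≤ A := Real.sqrt_nonneg _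
  have hB0 : 0 ≤ B := Real.sqrt_nonneg _
  have ha0 : 0 ≤ a' := Real.sqrt_nonneg _
  have hb0 : 0 ≤ b' := Real.sqrt_nonneg _
  set t := a' + b' with htdef
  have ht0 : 0 ≤ t := by positivity
  -- N(p+q) ≤ a' + b'
  have hNsum : Real.sqrt ((p + q) ⬝ᵥ (g⁻¹ *ᵥ (p + q))) ≤ t := by
    rw [← hmom, hQ, Matrix.mulVec_add]
    calc Real.sqrt ((S *ᵥ p' + S *ᵥ q') ⬝ᵥ (S *ᵥ p' + S *ᵥ q'))
        ≤ Real.sqrt ((S *ᵥ p') ⬝ᵥ (S *ᵥ p')) + Real.sqrt ((S *ᵥ q') ⬝ᵥ (S *ᵥ q')) :=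
          dot_sqrt_triangle _ _
      _ = t := by rw [htdef, ha', hb', hQ p', hQ q']
  -- B ≥ A - t
  have hBlow : A - t ≤ B := by
    have h1 : A ≤ Real.sqrt ((p + q) ⬝ᵥ (g⁻¹ *ᵥ (p + q))) + B := by
      have hpq : S *ᵥ p = S *ᵥ (p + q) + S *ᵥ (-q) := by
        rw [← Matrix.mulVec_add]; congr 1; funext i; simp
      rw [hA, hQ, hQ, hB, hQ, hpq]
      have := dot_sqrt_triangle (S *ᵥ (p + q)) (S *ᵥ (-q))
      have hneg : (S *ᵥ (-q)) ⬝ᵥ (S *ᵥ (-q)) = (S *ᵥ q) ⬝ᵥ (S *ᵥ q) := by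
        rw [Matrix.mulVec_neg]
        simp [dotProduct, neg_mul_neg]
      rwa [hneg] at this
    linarith [hNsum]
  -- key bound : A ≤ 2t
  have hkey : A ≤ 2 * t := by
    rcases le_or_gt A t with hca | hca
    · linarith
    · have hAt : t ≤ A := hca.le
      apply key_ineq ht0 hAt
      have hmono : Real.sqrt (1 + (A - t)^2) ≤ Real.sqrt (1 + B^2) := by
        apply Real.sqrt_le_sqrt
        have : (A - t)^2 ≤ B^2 := pow_le_pow_left₀ (by linarith) hBlow 2
        linarith
      have hBrw : Real.sqrt (1 + B^2) = Real.sqrt (1 + q ⬝ᵥ (g⁻¹ *ᵥ q)) := by rw [hB2]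
      have hArw : Real.sqrt (1 + A^2) = Real.sqrt (1 + p ⬝ᵥ (g⁻¹ *ᵥ p)) := by rw [hA2]
      have harw : Real.sqrt (1 + a'^2) = Real.sqrt (1 + p' ⬝ᵥ (g⁻¹ *ᵥ p')) := by rw [ha2]
      have hbrw : Real.sqrt (1 + b'^2) = Real.sqrt (1 + q' ⬝ᵥ (g⁻¹ *ᵥ q')) := by rw [hb2]
      have hsup := sqrt_one_add_sq_superadd ha0 hb0
      calc Real.sqrt (1 + A^2) + Real.sqrt (1 + (A - t)^2)
          ≤ Real.sqrt (1 + A^2) + Real.sqrt (1 + B^2) := by linarith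
        _ = Real.sqrt (1 + p' ⬝ᵥ (g⁻¹ *ᵥ p')) + Real.sqrt (1 + q' ⬝ᵥ (g⁻¹ *ᵥ q')) := by
            rw [hArw, hBrw, hen]
        _ = Real.sqrt (1 + a'^2) + Real.sqrt (1 + b'^2) := by rw [harw, hbrw]
        _ ≤ 1 + Real.sqrt (1 + (a' + b')^2) := hsup
  -- Euclidean bounds
  set sp := Real.sqrt (p' ⬝ᵥ p') with hsp
  set sq := Real.sqrt (q' ⬝ᵥ q') with hsq
  have hsp2 : sp^2 = p' ⬝ᵥ p' := Real.sq_sqrt (dot_self_nonneg' _)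
  have hsq2 : sq^2 = q' ⬝ᵥ q' := Real.sq_sqrt (dot_self_nonneg' _)
  have hsp0 : 0 ≤ sp := Real.sqrt_nonneg _
  have hsq0 : 0 ≤ sq := Real.sqrt_nonneg _
  have hrc : (0:ℝ) < Real.sqrt c₀ := Real.sqrt_pos.mpr hc₀0
  have hrc2 : (Real.sqrt c₀)^2 = c₀ := Real.sq_sqrt hc₀0.le
  -- a' ≤ √c₀ sp / R
  have hau : a' ≤ Real.sqrt c₀ * sp / R := by
    apply le_of_sq_le_sq' (by positivity)
    rw [ha2]
    have := (hbounds p').2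
    calc p' ⬝ᵥ (g⁻¹ *ᵥ p') ≤ c₀ * (p' ⬝ᵥ p') / R^2 := this
      _ = (Real.sqrt c₀)^2 * (p' ⬝ᵥ p') / R^2 := by rw [hrc2]
      _ = (Real.sqrt c₀ * sp / R)^2 := by rw [← hsp2]; ring
  have hbu : b' ≤ Real.sqrt c₀ * sq / R := by
    apply le_of_sq_le_sq' (by positivity)
    rw [hb2]
    have := (hbounds q').2
    calc q' ⬝ᵥ (g⁻¹ *ᵥ q') ≤ c₀ * (q' ⬝ᵥ q') / R^2 := this
      _ = (Real.sqrt c₀)^2 * (q' ⬝ᵥ q') / R^2 := by rw [hrc2]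
      _ = (Real.sqrt c₀ * sq / R)^2 := by rw [← hsq2]; ring
  -- p⬝p ≤ c₀ R² A²
  have hplow : p ⬝ᵥ p ≤ c₀ * R^2 * A^2 := by
    have h := (hbounds p).1
    rw [hA2]
    rw [div_le_iff₀ (by positivity)] at h
    linarith
  -- combine: p⬝p ≤ 4 c₀² (sp + sq)²
  have hfinal2 : p ⬝ᵥ p ≤ 4 * c₀^2 * (sp + sq)^2 := by
    have ht_le : t ≤ Real.sqrt c₀ * (sp + sq) / R := by
      rw [htdef]
      have : Real.sqrt c₀ * sp / R + Real.sqrt c₀ * sq / R = Real.sqrt c₀ * (sp + sq) / R := by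
        ring
      linarith [hau, hbu]
    have hA4t : A^2 ≤ 4 * t^2 := by
      have h := pow_le_pow_left₀ hA0 hkey 2
      calc A^2 ≤ (2*t)^2 := h
        _ = 4 * t^2 := by ring
    have ht2 : t^2 ≤ c₀ * (sp + sq)^2 / R^2 := by
      have h0 : 0 ≤ Real.sqrt c₀ * (sp + sq) / R := by positivity
      have := mul_self_le_mul_self ht0 ht_le
      calc t^2 = t * t := by ring
        _ ≤ (Real.sqrt c₀ * (sp + sq) / R) * (Real.sqrt c₀ * (sp + sq) / R) := this
        _ = (Real.sqrt c₀)^2 * (sp + sq)^2 / R^2 := by ring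
        _ = c₀ * (sp + sq)^2 / R^2 := by rw [hrc2]
    calc p ⬝ᵥ p ≤ c₀ * R^2 * A^2 := hplow
      _ ≤ c₀ * R^2 * (4 * t^2) := by
          apply mul_le_mul_of_nonneg_left hA4t (by positivity)
      _ ≤ c₀ * R^2 * (4 * (c₀ * (sp + sq)^2 / R^2)) := by
          apply mul_le_mul_of_nonneg_left (by linarith) (by positivity)
      _ = 4 * c₀^2 * (sp + sq)^2 := by field_simp
  -- final weight inequality
  apply le_of_sq_le_sq' (by positivity)
  have hgoal2 : (3 * c₀ * Real.sqrt (1 + p' ⬝ᵥ p') * Real.sqrt (1 + q' ⬝ᵥ q'))^2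
      = 9 * c₀^2 * (1 + p' ⬝ᵥ p') * (1 + q' ⬝ᵥ q') := by
    have h1 : (Real.sqrt (1 + p' ⬝ᵥ p'))^2 = 1 + p' ⬝ᵥ p' :=
      Real.sq_sqrt (by linarith [dot_self_nonneg' p'])
    have h2 : (Real.sqrt (1 + q' ⬝ᵥ q'))^2 = 1 + q' ⬝ᵥ q' :=
      Real.sq_sqrt (by linarith [dot_self_nonneg' q'])
    calc (3 * c₀ * Real.sqrt (1 + p' ⬝ᵥ p') * Real.sqrt (1 + q' ⬝ᵥ q'))^2
        = 9 * c₀^2 * (Real.sqrt (1 + p' ⬝ᵥ p'))^2 * (Real.sqrt (1 + q' ⬝ᵥ q'))^2 := by ring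
      _ = 9 * c₀^2 * (1 + p' ⬝ᵥ p') * (1 + q' ⬝ᵥ q') := by rw [h1, h2]
  rw [hgoal2]
  have hps : (Real.sqrt (1 + p ⬝ᵥ p))^2 = 1 + p ⬝ᵥ p :=
    Real.sq_sqrt (by linarith [dot_self_nonneg' p])
  rw [hps]
  have hdp' : 0 ≤ p' ⬝ᵥ p' := dot_self_nonneg' p'
  have hdq' : 0 ≤ q' ⬝ᵥ q' := dot_self_nonneg' q'
  have e1 : (sp + sq)^2 ≤ 2 * (p' ⬝ᵥ p' + q' ⬝ᵥ q') := by
    have h := two_mul_helper (a := sp) (b := sq)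
    rw [hsp2, hsq2] at h
    exact h
  have e2 : p ⬝ᵥ p ≤ 8 * c₀^2 * (p' ⬝ᵥ p' + q' ⬝ᵥ q') := by
    have := mul_le_mul_of_nonneg_left e1 (show (0:ℝ) ≤ 4 * c₀^2 by positivity)
    linarith
  have hc2 : 1 ≤ c₀^2 := by
    calc (1:ℝ) = 1*1 := by norm_num
      _ ≤ c₀*c₀ := mul_le_mul hc₀ hc₀ zero_le_one (by linarith)
      _ = c₀^2 := by ring
  have X0 : 0 ≤ c₀^2 * (p' ⬝ᵥ p') := by positivity
  have Y0 : 0 ≤ c₀^2 * (q' ⬝ᵥ q') := by positivity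
  have Z0 : 0 ≤ c₀^2 * ((p' ⬝ᵥ p') * (q' ⬝ᵥ q')) := by positivity
  have expand : 9*c₀^2*(1 + p' ⬝ᵥ p')*(1 + q' ⬝ᵥ q')
      = 9*c₀^2 + 9*(c₀^2*(p' ⬝ᵥ p')) + 9*(c₀^2*(q' ⬝ᵥ q'))
        + 9*(c₀^2*((p' ⬝ᵥ p')*(q' ⬝ᵥ q'))) := by ring
  have e3 : p ⬝ᵥ p ≤ 8*(c₀^2*(p' ⬝ᵥ p')) + 8*(c₀^2*(q' ⬝ᵥ q')) := by linarith [e2]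
  linarith
end

section
/- For every multi-index A∈ℕ³ with |A|≥1 there is a constant C>0 such that for all p,q∈ℝ³, |∂^A_p [1/(n⁰+√(s(p,q)))]| ≤ C (q⁰)^{|A|} / (n⁰+√(s(p,q))), where n⁰=p⁰+q⁰ and the derivatives are taken in the variable p. -/
open Matrix

noncomputable section

/-- First-order partial derivative in the momentum variable `p_i`. -/
def pd (i : Fin 3) (f : (Fin 3 → ℝ) → ℝ) : (Fin 3 → ℝ) → ℝ :=
  fun p => fderiv ℝ f p (Pi.single i 1)

/-- Mixed partial derivative `∂^A` for a multi-index `A ∈ ℕ³`. -/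
def multiDeriv (A : Fin 3 → ℕ) (f : (Fin 3 → ℝ) → ℝ) : (Fin 3 → ℝ) → ℝ :=
  (pd 0)^[A 0] ((pd 1)^[A 1] ((pd 2)^[A 2] f))

/-- Total energy `s(p,q) = (p⁰+q⁰)² − |p+q|²` with `p⁰ = √(1+|p|²)` (orthonormal frame). -/
def sTot (p q : Fin 3 → ℝ) : ℝ :=
  (Real.sqrt (1 + p ⬝ᵥ p) + Real.sqrt (1 + q ⬝ᵥ q))^2 - (p + q) ⬝ᵥ (p + q)

namespace MDAux

def aF (p : Fin 3 → ℝ) : ℝ := Real.sqrt (1 + p ⬝ᵥ p)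
def tF (q p : Fin 3 → ℝ) : ℝ := Real.sqrt (sTot p q)
def EF (q p : Fin 3 → ℝ) : ℝ := aF p + aF q + tF q p
def wF (q : Fin 3 → ℝ) : (Fin 3 → ℝ) → ℝ := fun p => (EF q p)⁻¹
def iaF (p : Fin 3 → ℝ) : ℝ := (aF p)⁻¹
def uF (i : Fin 3) (p : Fin 3 → ℝ) : ℝ := p i * iaF p
def rF (q p : Fin 3 → ℝ) : ℝ := (tF q p)⁻¹
def MF (q p : Fin 3 → ℝ) : ℝ := (aF p + aF q) * iaF p
def VF (q : Fin 3 → ℝ) (i : Fin 3) (p : Fin 3 → ℝ) : ℝ :=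
  ((aF p + aF q) * uF i p - p i - q i) * rF q p

lemma dot_self_nonneg (p : Fin 3 → ℝ) : 0 ≤ p ⬝ᵥ p :=
  Finset.sum_nonneg fun i _ => mul_self_nonneg (p i)

lemma one_le_aF (p : Fin 3 → ℝ) : 1 ≤ aF p :=
  Real.one_le_sqrt.mpr (by nlinarith [dot_self_nonneg p])

lemma aF_pos (p : Fin 3 → ℝ) : 0 < aF p := lt_of_lt_of_le one_pos (one_le_aF p)

lemma aF_sq (p : Fin 3 → ℝ) : aF p ^ 2 = 1 + p ⬝ᵥ p :=
  Real.sq_sqrt (by nlinarith [dot_self_nonneg p])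

lemma abs_coord_le (p : Fin 3 → ℝ) (i : Fin 3) : |p i| ≤ aF p := by
  have h1 : p i * p i ≤ p ⬝ᵥ p := by
    have := Finset.single_le_sum (f := fun j => p j * p j)
      (fun j _ => mul_self_nonneg (p j)) (Finset.mem_univ i)
    simpa [dotProduct] using this
  have h2 : |p i| = Real.sqrt (p i * p i) := (Real.sqrt_mul_self_eq_abs (p i)).symm
  rw [h2]
  exact Real.sqrt_le_sqrt (by nlinarith)

lemma sTot_eq (p q : Fin 3 → ℝ) :
    sTot p q = 2 + 2 * (aF p * aF q - p ⬝ᵥ q) := by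
  have hpq : (p + q) ⬝ᵥ (p + q) = p ⬝ᵥ p + 2 * (p ⬝ᵥ q) + q ⬝ᵥ q := by
    simp only [dotProduct, Pi.add_apply, Finset.mul_sum]
    rw [← Finset.sum_add_distrib, ← Finset.sum_add_distrib]
    exact Finset.sum_congr rfl fun i _ => by ring
  have hap := aF_sq p
  have haq := aF_sq q
  unfold sTot
  rw [hpq]
  have : (Real.sqrt (1 + p ⬝ᵥ p) + Real.sqrt (1 + q ⬝ᵥ q))^2
      = aF p ^2 + 2 * (aF p * aF q) + aF q ^2 := by unfold aF; ring
  rw [this, hap, haq]; ring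

lemma cauchy (p q : Fin 3 → ℝ) : (p ⬝ᵥ q)^2 ≤ (p ⬝ᵥ p) * (q ⬝ᵥ q) := by
  have := Finset.sum_mul_sq_le_sq_mul_sq Finset.univ p q
  have e1 : p ⬝ᵥ p = ∑ i, p i ^2 := by simp [dotProduct, sq]
  have e2 : q ⬝ᵥ q = ∑ i, q i ^2 := by simp [dotProduct, sq]
  rw [e1, e2]
  simpa [dotProduct] using this

lemma dot_le (p q : Fin 3 → ℝ) : p ⬝ᵥ q ≤ aF p * aF q := by
  have hc := cauchy p q
  have hap := aF_sq p
  have haq := aF_sq q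
  have h1 : 1 ≤ aF p := one_le_aF p
  have h2 : 1 ≤ aF q := one_le_aF q
  have h3 : (p ⬝ᵥ q)^2 ≤ (aF p * aF q)^2 := by nlinarith
  have h4 : (0:ℝ) ≤ aF p * aF q := by nlinarith
  calc p ⬝ᵥ q ≤ |p ⬝ᵥ q| := le_abs_self _
    _ = Real.sqrt ((p ⬝ᵥ q)^2) := (Real.sqrt_sq_eq_abs _).symm
    _ ≤ Real.sqrt ((aF p * aF q)^2) := Real.sqrt_le_sqrt h3
    _ = aF p * aF q := Real.sqrt_sq h4

lemma sKey (p q : Fin 3 → ℝ) :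
    1 + p ⬝ᵥ p + q ⬝ᵥ q ≤ (aF p * aF q) * sTot p q := by
  have hc := cauchy p q
  have hap := aF_sq p
  have haq := aF_sq q
  have h1 : 1 ≤ aF p := one_le_aF p
  have h2 : 1 ≤ aF q := one_le_aF q
  have hd := dot_le p q
  rw [sTot_eq]
  nlinarith [sq_nonneg (aF p * aF q - p ⬝ᵥ q)]

lemma two_le_sTot (p q : Fin 3 → ℝ) : 2 ≤ sTot p q := by
  have hd := dot_le p q
  rw [sTot_eq]; nlinarith

lemma sTot_pos (p q : Fin 3 → ℝ) : 0 < sTot p q := lt_of_lt_of_le two_pos (two_le_sTot p q)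

lemma tF_sq (q p : Fin 3 → ℝ) : tF q p ^ 2 = sTot p q :=
  Real.sq_sqrt (le_of_lt (sTot_pos p q))

lemma tF_pos (q p : Fin 3 → ℝ) : 0 < tF q p := Real.sqrt_pos.mpr (sTot_pos p q)

lemma n_sq_le (p q : Fin 3 → ℝ) :
    (aF p + aF q)^2 ≤ 4 * ((aF p * aF q) * sTot p q) := by
  have hk := sKey p q
  have hap := aF_sq p
  have haq := aF_sq q
  nlinarith [sq_nonneg (aF p - aF q), dot_self_nonneg p, dot_self_nonneg q]

lemma EF_ge_two (q p : Fin 3 → ℝ) : 2 ≤ EF q p := by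
  have := one_le_aF p
  have := one_le_aF q
  have := tF_pos q p
  unfold EF; linarith

lemma EF_pos (q p : Fin 3 → ℝ) : 0 < EF q p := lt_of_lt_of_le two_pos (EF_ge_two q p)

lemma aF_le_EF (q p : Fin 3 → ℝ) : aF p ≤ EF q p := by
  have := one_le_aF q
  have := tF_pos q p
  unfold EF; linarith


-- square-root atoms
lemma one_le_sqa (p : Fin 3 → ℝ) : 1 ≤ Real.sqrt (aF p) :=
  Real.one_le_sqrt.mpr (one_le_aF p)

lemma sqa_pos (p : Fin 3 → ℝ) : 0 < Real.sqrt (aF p) :=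
  lt_of_lt_of_le one_pos (one_le_sqa p)

lemma sqa_sq (p : Fin 3 → ℝ) : Real.sqrt (aF p) * Real.sqrt (aF p) = aF p :=
  Real.mul_self_sqrt (le_of_lt (aF_pos p))

lemma abs_uF (i : Fin 3) (p : Fin 3 → ℝ) : |uF i p| ≤ 1 := by
  have h := abs_coord_le p i
  have ha := aF_pos p
  have : |uF i p| = |p i| * (aF p)⁻¹ := by
    rw [uF, iaF, abs_mul, abs_inv, abs_of_pos ha]
  rw [this]
  rw [← mul_inv_cancel₀ (ne_of_gt ha)]
  exact mul_le_mul_of_nonneg_right h (le_of_lt (inv_pos.mpr ha))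

lemma abs_iaF (p : Fin 3 → ℝ) : |iaF p| ≤ 1 := by
  have ha := aF_pos p
  rw [iaF, abs_inv, abs_of_pos ha]
  rw [inv_le_one_iff₀]
  right; exact one_le_aF p

lemma abs_rF (q p : Fin 3 → ℝ) :
    |rF q p| ≤ Real.sqrt (aF q) * (Real.sqrt (aF p))⁻¹ := by
  have ht := tF_pos q p
  have hxp := sqa_pos p
  have hxq := sqa_pos q
  -- √(aF p) ≤ √(aF q) * tF q p
  have key : Real.sqrt (aF p) ≤ Real.sqrt (aF q) * tF q p := by
    have h1 : aF p ≤ aF q * sTot p q := by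
      have hk := sKey p q
      have hap := aF_sq p
      have ha := aF_pos p
      have haq := aF_pos q
      have hs := sTot_pos p q
      nlinarith [dot_self_nonneg q]
    calc Real.sqrt (aF p) ≤ Real.sqrt (aF q * sTot p q) := Real.sqrt_le_sqrt h1
      _ = Real.sqrt (aF q) * tF q p := by
          rw [Real.sqrt_mul (le_of_lt (aF_pos q))]; rfl
  rw [rF, abs_inv, abs_of_pos ht]
  rw [inv_le_iff_one_le_mul₀ ht]
  calc (1:ℝ) = Real.sqrt (aF p) * (Real.sqrt (aF p))⁻¹ := (mul_inv_cancel₀ (ne_of_gt hxp)).symm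
    _ ≤ (Real.sqrt (aF q) * tF q p) * (Real.sqrt (aF p))⁻¹ := by
        apply mul_le_mul_of_nonneg_right key (le_of_lt (inv_pos.mpr hxp))
    _ = Real.sqrt (aF q) * (Real.sqrt (aF p))⁻¹ * tF q p := by ring

lemma abs_MF (q p : Fin 3 → ℝ) : |MF q p| ≤ 2 * aF q := by
  have hap := aF_pos p
  have h1p := one_le_aF p
  have h1q := one_le_aF q
  have hM : MF q p = 1 + aF q * (aF p)⁻¹ := by
    rw [MF, iaF]; field_simp
  rw [hM]
  have hinv : (aF p)⁻¹ ≤ 1 := by rw [inv_le_one_iff₀]; right; exact h1p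
  have h2 : aF q * (aF p)⁻¹ ≤ aF q := by
    nlinarith [inv_pos.mpr hap]
  have hpos : (0:ℝ) < 1 + aF q * (aF p)⁻¹ := by positivity
  rw [abs_of_pos hpos]
  linarith

lemma nr_le (q p : Fin 3 → ℝ) :
    (aF p + aF q) * rF q p ≤ 2 * (Real.sqrt (aF p) * Real.sqrt (aF q)) := by
  have ht := tF_pos q p
  have key : aF p + aF q ≤ 2 * (Real.sqrt (aF p) * Real.sqrt (aF q)) * tF q p := by
    have h2 : (aF p + aF q)^2 ≤ (2 * (Real.sqrt (aF p) * Real.sqrt (aF q)) * tF q p)^2 := by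
      have hx := sqa_sq p
      have hy := sqa_sq q
      have hts := tF_sq q p
      have e : (2 * (Real.sqrt (aF p) * Real.sqrt (aF q)) * tF q p)^2
          = 4 * (aF p * aF q * sTot p q) := by
        calc (2 * (Real.sqrt (aF p) * Real.sqrt (aF q)) * tF q p)^2
            = 4 * ((Real.sqrt (aF p) * Real.sqrt (aF p)) * ((Real.sqrt (aF q) * Real.sqrt (aF q)) * tF q p ^ 2)) := by ring
          _ = 4 * (aF p * aF q * sTot p q) := by rw [hx, hy, hts]; ring
      rw [e]
      linarith [n_sq_le p q]
    have hpos : 0 ≤ 2 * (Real.sqrt (aF p) * Real.sqrt (aF q)) * tF q p := by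
      positivity
    nlinarith [aF_pos p, aF_pos q]
  rw [rF, ← div_eq_mul_inv, div_le_iff₀ ht]
  exact key

lemma abs_VF (q : Fin 3 → ℝ) (i : Fin 3) (p : Fin 3 → ℝ) :
    |VF q i p| ≤ 4 * (Real.sqrt (aF p) * Real.sqrt (aF q)) := by
  have ht := tF_pos q p
  have h1 : |(aF p + aF q) * uF i p - p i - q i| ≤ 2 * (aF p + aF q) := by
    have hu := abs_uF i p
    have hp := abs_coord_le p i
    have hq := abs_coord_le q i
    have h2 : |(aF p + aF q) * uF i p| ≤ aF p + aF q := by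
      rw [abs_mul, abs_of_pos (by linarith [aF_pos p, aF_pos q] : (0:ℝ) < aF p + aF q)]
      nlinarith [aF_pos p, aF_pos q, abs_nonneg (uF i p)]
    calc |(aF p + aF q) * uF i p - p i - q i|
        ≤ |(aF p + aF q) * uF i p| + |p i| + |q i| := by
          have := abs_sub (((aF p + aF q) * uF i p) - p i) (q i)
          have h3 := abs_sub ((aF p + aF q) * uF i p) (p i)
          calc |(aF p + aF q) * uF i p - p i - q i|
              ≤ |(aF p + aF q) * uF i p - p i| + |q i| := abs_sub _ _
            _ ≤ |(aF p + aF q) * uF i p| + |p i| + |q i| := by linarith [abs_sub ((aF p + aF q) * uF i p) (p i)]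
      _ ≤ 2 * (aF p + aF q) := by linarith [aF_le_EF q p]
  have hnr := nr_le q p
  have hr0 : 0 ≤ rF q p := le_of_lt (inv_pos.mpr ht)
  have : |VF q i p| = |(aF p + aF q) * uF i p - p i - q i| * rF q p := by
    rw [VF, abs_mul, abs_of_nonneg hr0]
  rw [this]
  calc |(aF p + aF q) * uF i p - p i - q i| * rF q p
      ≤ (2 * (aF p + aF q)) * rF q p := mul_le_mul_of_nonneg_right h1 hr0
    _ = 2 * ((aF p + aF q) * rF q p) := by ring
    _ ≤ 2 * (2 * (Real.sqrt (aF p) * Real.sqrt (aF q))) := by linarith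
    _ = 4 * (Real.sqrt (aF p) * Real.sqrt (aF q)) := by ring

lemma abs_wF (q p : Fin 3 → ℝ) : |wF q p| ≤ (EF q p)⁻¹ := by
  rw [wF, abs_inv, abs_of_pos (EF_pos q p)]


section pdRules

variable {f g : (Fin 3 → ℝ) → ℝ} {p : Fin 3 → ℝ} {i : Fin 3}

lemma pd_add (hf : DifferentiableAt ℝ f p) (hg : DifferentiableAt ℝ g p) :
    pd i (fun x => f x + g x) p = pd i f p + pd i g p := by
  simp [pd, fderiv_fun_add hf hg]

lemma pd_sub (hf : DifferentiableAt ℝ f p) (hg : DifferentiableAt ℝ g p) :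
    pd i (fun x => f x - g x) p = pd i f p - pd i g p := by
  simp [pd, fderiv_fun_sub hf hg]

lemma pd_neg : pd i (fun x => -f x) p = -pd i f p := by
  simp [pd, fderiv_neg]

lemma pd_const (c : ℝ) : pd i (fun _ => c) p = 0 := by
  simp [pd]

lemma pd_mul (hf : DifferentiableAt ℝ f p) (hg : DifferentiableAt ℝ g p) :
    pd i (fun x => f x * g x) p = f p * pd i g p + g p * pd i f p := by
  simp [pd, fderiv_fun_mul hf hg]

lemma pd_inv (hf : DifferentiableAt ℝ f p) (h0 : f p ≠ 0) :
    pd i (fun x => (f x)⁻¹) p = -((f p ^ 2)⁻¹ * pd i f p) := by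
  have h := (hasDerivAt_inv h0).comp_hasFDerivAt p hf.hasFDerivAt
  have := h.fderiv
  show fderiv ℝ (fun x => (f x)⁻¹) p (Pi.single i 1) = _
  have e : (fun x => (f x)⁻¹) = (fun y => y⁻¹) ∘ f := rfl
  rw [e, this]
  simp [pd]
  try ring

lemma pd_sqrt (hf : DifferentiableAt ℝ f p) (h0 : f p ≠ 0) :
    pd i (fun x => Real.sqrt (f x)) p = 1 / (2 * Real.sqrt (f p)) * pd i f p := by
  have h := hf.hasFDerivAt.sqrt h0
  have := h.fderiv
  show fderiv ℝ (fun x => Real.sqrt (f x)) p (Pi.single i 1) = _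
  rw [this]
  simp [pd]

lemma pd_coord (j : Fin 3) : pd i (fun x => x j) p = if j = i then 1 else 0 := by
  have e : (fun x : Fin 3 → ℝ => x j)
      = ⇑(ContinuousLinearMap.proj (R := ℝ) (φ := fun _ : Fin 3 => ℝ) j) := rfl
  rw [pd, e, ContinuousLinearMap.fderiv]
  simp [Pi.single_apply]

end pdRules

section dotCalc

variable (q p : Fin 3 → ℝ) (i : Fin 3)

private lemma shift_eq :
    (fun x : Fin 3 → ℝ => (x + q) ⬝ᵥ (x + q))
      = fun x : Fin 3 → ℝ => ∑ j, (x j + q j) * (x j + q j) := rfl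

private lemma hasF_shiftdot :
    HasFDerivAt (fun x : Fin 3 → ℝ => (x + q) ⬝ᵥ (x + q))
      (∑ j, ((p j + q j) • (ContinuousLinearMap.proj (R := ℝ) (φ := fun _ : Fin 3 => ℝ) j)
        + (p j + q j) • (ContinuousLinearMap.proj (R := ℝ) (φ := fun _ : Fin 3 => ℝ) j))) p := by
  rw [shift_eq]
  apply HasFDerivAt.fun_sum
  intro j _
  have hc : HasFDerivAt (fun x : Fin 3 → ℝ => x j + q j)
      (ContinuousLinearMap.proj (R := ℝ) (φ := fun _ : Fin 3 => ℝ) j) p :=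
    (ContinuousLinearMap.proj (R := ℝ) (φ := fun _ : Fin 3 => ℝ) j).hasFDerivAt.add_const (q j)
  exact hc.mul hc

lemma diffAt_shiftdot : DifferentiableAt ℝ (fun x : Fin 3 → ℝ => (x + q) ⬝ᵥ (x + q)) p :=
  (hasF_shiftdot q p).differentiableAt

lemma pd_shiftdot : pd i (fun x : Fin 3 → ℝ => (x + q) ⬝ᵥ (x + q)) p = 2 * (p i + q i) := by
  rw [pd, (hasF_shiftdot q p).fderiv]
  simp only [ContinuousLinearMap.coe_sum', Finset.sum_apply, ContinuousLinearMap.add_apply,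
    ContinuousLinearMap.smul_apply, ContinuousLinearMap.proj_apply, Pi.single_apply, smul_eq_mul]
  rw [Finset.sum_congr rfl (fun j _ => show ((p j + q j) * (if j = i then (1:ℝ) else 0) + (p j + q j) * (if j = i then 1 else 0)) = (if j = i then 2 * (p j + q j) else 0) from by by_cases h : j = i <;> simp [h] <;> ring)]
  rw [Finset.sum_ite_eq' Finset.univ i (fun j => 2 * (p j + q j))]
  simp

private lemma hasF_dotself :
    HasFDerivAt (fun x : Fin 3 → ℝ => x ⬝ᵥ x)
      (∑ j, ((p j) • (ContinuousLinearMap.proj (R := ℝ) (φ := fun _ : Fin 3 => ℝ) j)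
        + (p j) • (ContinuousLinearMap.proj (R := ℝ) (φ := fun _ : Fin 3 => ℝ) j))) p := by
  have e : (fun x : Fin 3 → ℝ => x ⬝ᵥ x) = fun x : Fin 3 → ℝ => ∑ j, x j * x j := rfl
  rw [e]
  apply HasFDerivAt.fun_sum
  intro j _
  have hc : HasFDerivAt (fun x : Fin 3 → ℝ => x j)
      (ContinuousLinearMap.proj (R := ℝ) (φ := fun _ : Fin 3 => ℝ) j) p :=
    (ContinuousLinearMap.proj (R := ℝ) (φ := fun _ : Fin 3 => ℝ) j).hasFDerivAt
  exact hc.mul hc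

lemma diffAt_dotself : DifferentiableAt ℝ (fun x : Fin 3 → ℝ => x ⬝ᵥ x) p :=
  (hasF_dotself p).differentiableAt

lemma pd_dotself : pd i (fun x : Fin 3 → ℝ => x ⬝ᵥ x) p = 2 * p i := by
  rw [pd, (hasF_dotself p).fderiv]
  simp only [ContinuousLinearMap.coe_sum', Finset.sum_apply, ContinuousLinearMap.add_apply,
    ContinuousLinearMap.smul_apply, ContinuousLinearMap.proj_apply, Pi.single_apply, smul_eq_mul]
  rw [Finset.sum_congr rfl (fun j _ => show ((p j) * (if j = i then (1:ℝ) else 0) + (p j) * (if j = i then 1 else 0)) = (if j = i then 2 * (p j) else 0) from by by_cases h : j = i <;> simp [h] <;> ring)]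
  rw [Finset.sum_ite_eq' Finset.univ i (fun j => 2 * (p j))]
  simp

end dotCalc


section gensCalc

variable (q p : Fin 3 → ℝ) (i j : Fin 3)

lemma one_dot_ne : (1 + p ⬝ᵥ p) ≠ 0 := by nlinarith [dot_self_nonneg p]

lemma diffAt_coord : DifferentiableAt ℝ (fun x : Fin 3 → ℝ => x i) p :=
  (ContinuousLinearMap.proj (R := ℝ) (φ := fun _ : Fin 3 => ℝ) i).differentiableAt

lemma diffAt_aF : DifferentiableAt ℝ aF p := by
  show DifferentiableAt ℝ (fun x : Fin 3 → ℝ => Real.sqrt (1 + x ⬝ᵥ x)) p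
  exact ((diffAt_dotself p).const_add 1).sqrt (one_dot_ne p)

lemma pd_aF : pd i aF p = uF i p := by
  have hd : DifferentiableAt ℝ (fun x : Fin 3 → ℝ => 1 + x ⬝ᵥ x) p :=
    (diffAt_dotself p).const_add 1
  have e1 : pd i aF p = 1 / (2 * Real.sqrt (1 + p ⬝ᵥ p)) * pd i (fun x : Fin 3 → ℝ => 1 + x ⬝ᵥ x) p :=
    pd_sqrt hd (one_dot_ne p)
  have e2 : pd i (fun x : Fin 3 → ℝ => 1 + x ⬝ᵥ x) p = 0 + 2 * p i := by
    rw [pd_add (differentiableAt_const 1) (diffAt_dotself p), pd_const, pd_dotself]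
  rw [e1, e2]
  have ha := aF_pos p
  unfold uF iaF
  have : Real.sqrt (1 + p ⬝ᵥ p) = aF p := rfl
  rw [this]
  field_simp
  ring

def sF (q : Fin 3 → ℝ) : (Fin 3 → ℝ) → ℝ := fun x => sTot x q

lemma sF_eq : sF q = fun x => (aF x + aF q) * (aF x + aF q) - (x + q) ⬝ᵥ (x + q) := by
  funext x; unfold sF sTot aF; ring

lemma diffAt_sF : DifferentiableAt ℝ (sF q) p := by
  rw [sF_eq]
  exact (((diffAt_aF p).add_const (aF q)).mul ((diffAt_aF p).add_const (aF q))).sub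
    (diffAt_shiftdot q p)

lemma pd_sF : pd i (sF q) p = 2 * ((aF p + aF q) * uF i p) - 2 * (p i + q i) := by
  rw [sF_eq]
  have hn : DifferentiableAt ℝ (fun x : Fin 3 → ℝ => aF x + aF q) p :=
    (diffAt_aF p).add_const (aF q)
  rw [pd_sub (hn.fun_mul hn) (diffAt_shiftdot q p), pd_mul hn hn, pd_shiftdot]
  have : pd i (fun x : Fin 3 → ℝ => aF x + aF q) p = uF i p := by
    rw [pd_add (diffAt_aF p) (differentiableAt_const (aF q)), pd_const, pd_aF]; ring
  rw [this]
  ring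

lemma diffAt_tF : DifferentiableAt ℝ (tF q) p := by
  show DifferentiableAt ℝ (fun x : Fin 3 → ℝ => Real.sqrt (sF q x)) p
  exact (diffAt_sF q p).sqrt (ne_of_gt (sTot_pos p q))

lemma pd_tF : pd i (tF q) p = VF q i p := by
  have e1 : pd i (tF q) p = 1 / (2 * Real.sqrt (sF q p)) * pd i (sF q) p :=
    pd_sqrt (diffAt_sF q p) (ne_of_gt (sTot_pos p q))
  rw [e1, pd_sF]
  have ht := tF_pos q p
  have : Real.sqrt (sF q p) = tF q p := rfl
  rw [this]
  unfold VF rF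
  field_simp
  ring

lemma diffAt_iaF : DifferentiableAt ℝ iaF p := by
  show DifferentiableAt ℝ (fun x : Fin 3 → ℝ => (aF x)⁻¹) p
  exact (diffAt_aF p).inv (ne_of_gt (aF_pos p))

lemma pd_iaF : pd i iaF p = -(uF i p * (iaF p * iaF p)) := by
  show pd i (fun x : Fin 3 → ℝ => (aF x)⁻¹) p = _
  rw [pd_inv (diffAt_aF p) (ne_of_gt (aF_pos p)), pd_aF]
  unfold uF iaF
  rw [pow_two, mul_inv]
  ring

lemma diffAt_uF : DifferentiableAt ℝ (uF i) p := by
  show DifferentiableAt ℝ (fun x : Fin 3 → ℝ => x i * iaF x) p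
  exact (diffAt_coord p i).mul (diffAt_iaF p)

lemma pd_uF : pd j (uF i) p =
    (if i = j then 1 else 0) * iaF p - uF i p * uF j p * iaF p := by
  show pd j (fun x : Fin 3 → ℝ => x i * iaF x) p = _
  rw [pd_mul (diffAt_coord p i) (diffAt_iaF p), pd_coord, pd_iaF]
  unfold uF
  ring

lemma diffAt_rF : DifferentiableAt ℝ (rF q) p := by
  show DifferentiableAt ℝ (fun x : Fin 3 → ℝ => (tF q x)⁻¹) p
  exact (diffAt_tF q p).inv (ne_of_gt (tF_pos q p))

lemma pd_rF : pd i (rF q) p = -(VF q i p * (rF q p * rF q p)) := by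
  show pd i (fun x : Fin 3 → ℝ => (tF q x)⁻¹) p = _
  rw [pd_inv (diffAt_tF q p) (ne_of_gt (tF_pos q p)), pd_tF]
  unfold rF
  rw [pow_two, mul_inv]
  ring

lemma diffAt_MF : DifferentiableAt ℝ (MF q) p := by
  show DifferentiableAt ℝ (fun x : Fin 3 → ℝ => (aF x + aF q) * iaF x) p
  exact ((diffAt_aF p).add_const (aF q)).mul (diffAt_iaF p)

lemma pd_MF : pd i (MF q) p = uF i p * iaF p - MF q p * (uF i p * iaF p) := by
  show pd i (fun x : Fin 3 → ℝ => (aF x + aF q) * iaF x) p = _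
  have hn : DifferentiableAt ℝ (fun x : Fin 3 → ℝ => aF x + aF q) p :=
    (diffAt_aF p).add_const (aF q)
  rw [pd_mul hn (diffAt_iaF p), pd_iaF]
  have : pd i (fun x : Fin 3 → ℝ => aF x + aF q) p = uF i p := by
    rw [pd_add (diffAt_aF p) (differentiableAt_const (aF q)), pd_const, pd_aF]; ring
  rw [this]
  unfold MF
  ring

lemma diffAt_VFinner : DifferentiableAt ℝ (fun x : Fin 3 → ℝ => (aF x + aF q) * uF i x - x i - q i) p :=
  ((((diffAt_aF p).add_const (aF q)).mul (diffAt_uF p i)).sub (diffAt_coord p i)).sub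
    (differentiableAt_const (q i))

lemma diffAt_VF : DifferentiableAt ℝ (VF q i) p := by
  show DifferentiableAt ℝ (fun x : Fin 3 → ℝ => ((aF x + aF q) * uF i x - x i - q i) * rF q x) p
  exact (diffAt_VFinner q p i).mul (diffAt_rF q p)

lemma pd_VF : pd j (VF q i) p =
    (uF i p * uF j p + MF q p * ((if i = j then 1 else 0) - uF i p * uF j p)
      - (if i = j then 1 else 0)) * rF q p
    - VF q i p * (VF q j p * rF q p) := by
  show pd j (fun x : Fin 3 → ℝ => ((aF x + aF q) * uF i x - x i - q i) * rF q x) p = _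
  have hn : DifferentiableAt ℝ (fun x : Fin 3 → ℝ => aF x + aF q) p :=
    (diffAt_aF p).add_const (aF q)
  have hpdn : pd j (fun x : Fin 3 → ℝ => aF x + aF q) p = uF j p := by
    rw [pd_add (diffAt_aF p) (differentiableAt_const (aF q)), pd_const, pd_aF]; ring
  rw [pd_mul (diffAt_VFinner q p i) (diffAt_rF q p), pd_rF,
    pd_sub ((hn.fun_mul (diffAt_uF p i)).fun_sub (diffAt_coord p i)) (differentiableAt_const (q i)),
    pd_sub (hn.fun_mul (diffAt_uF p i)) (diffAt_coord p i),
    pd_mul hn (diffAt_uF p i), pd_uF, pd_coord, pd_const, hpdn]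
  have ht := tF_pos q p
  have ha := aF_pos p
  unfold VF MF rF uF iaF
  set d : ℝ := (if i = j then (1:ℝ) else 0) with hd
  field_simp
  ring

lemma diffAt_EF : DifferentiableAt ℝ (EF q) p := by
  show DifferentiableAt ℝ (fun x : Fin 3 → ℝ => aF x + aF q + tF q x) p
  exact ((diffAt_aF p).add_const (aF q)).add (diffAt_tF q p)

lemma pd_EF : pd i (EF q) p = uF i p + VF q i p := by
  show pd i (fun x : Fin 3 → ℝ => (aF x + aF q) + tF q x) p = _
  have hn : DifferentiableAt ℝ (fun x : Fin 3 → ℝ => aF x + aF q) p :=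
    (diffAt_aF p).add_const (aF q)
  rw [pd_add hn (diffAt_tF q p), pd_tF]
  have : pd i (fun x : Fin 3 → ℝ => aF x + aF q) p = uF i p := by
    rw [pd_add (diffAt_aF p) (differentiableAt_const (aF q)), pd_const, pd_aF]; ring
  rw [this]

lemma diffAt_wF : DifferentiableAt ℝ (wF q) p := by
  show DifferentiableAt ℝ (fun x : Fin 3 → ℝ => (EF q x)⁻¹) p
  exact (diffAt_EF q p).inv (ne_of_gt (EF_pos q p))

lemma pd_wF : pd i (wF q) p = -((uF i p + VF q i p) * (wF q p * wF q p)) := by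
  show pd i (fun x : Fin 3 → ℝ => (EF q x)⁻¹) p = _
  rw [pd_inv (diffAt_EF q p) (ne_of_gt (EF_pos q p)), pd_EF]
  unfold wF
  rw [pow_two, mul_inv]
  ring

lemma diff_uF : Differentiable ℝ (uF i) := fun p => diffAt_uF p i
lemma diff_iaF : Differentiable ℝ iaF := fun p => diffAt_iaF p
lemma diff_rF : Differentiable ℝ (rF q) := fun p => diffAt_rF q p
lemma diff_MF : Differentiable ℝ (MF q) := fun p => diffAt_MF q p
lemma diff_VF : Differentiable ℝ (VF q i) := fun p => diffAt_VF q p i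
lemma diff_wF : Differentiable ℝ (wF q) := fun p => diffAt_wF q p

end gensCalc


/-- A family `f q : (Fin 3 → ℝ) → ℝ` is `Nice m f B` if `|f q p| ≤ B q p`, and (when `m > 0`)
each `f q` is differentiable with `pd i (f q)` again nice at level `m-1` with bound
multiplied by a constant times `aF q = √(1+|q|²)`. -/
def Nice : ℕ → ((Fin 3 → ℝ) → (Fin 3 → ℝ) → ℝ) → ((Fin 3 → ℝ) → (Fin 3 → ℝ) → ℝ) → Prop
  | 0, f, B => ∀ q p, |f q p| ≤ B q p
  | m + 1, f, B => (∀ q p, |f q p| ≤ B q p) ∧ (∀ q, Differentiable ℝ (f q)) ∧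
      ∀ i : Fin 3, ∃ c : ℝ, 1 ≤ c ∧
        Nice m (fun q => pd i (f q)) (fun q p => c * aF q * B q p)

lemma nice_zero {f B} : Nice 0 f B ↔ ∀ q p, |f q p| ≤ B q p := Iff.rfl

lemma nice_succ {m f B} : Nice (m + 1) f B ↔
    (∀ q p, |f q p| ≤ B q p) ∧ (∀ q, Differentiable ℝ (f q)) ∧
      ∀ i : Fin 3, ∃ c : ℝ, 1 ≤ c ∧
        Nice m (fun q => pd i (f q)) (fun q p => c * aF q * B q p) := Iff.rfl

lemma Nice.abs_le : ∀ {m f B}, Nice m f B → ∀ q p, |f q p| ≤ B q p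
  | 0, _, _, h => h
  | (_ + 1), _, _, h => h.1

lemma Nice.bnd_nonneg {m f B} (h : Nice m f B) (q p : Fin 3 → ℝ) : 0 ≤ B q p :=
  le_trans (abs_nonneg _) (h.abs_le q p)

lemma Nice.congr {m f B g} (h : Nice m f B) (e : ∀ q p, f q p = g q p) : Nice m g B := by
  have : f = g := funext fun q => funext fun p => e q p
  exact this ▸ h

lemma Nice.mono : ∀ {m f B B'}, Nice m f B → (∀ q p, B q p ≤ B' q p) → Nice m f B' := by
  intro m
  induction m with
  | zero => intro f B B' h hle q p; exact le_trans (h q p) (hle q p)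
  | succ m ih =>
    intro f B B' h hle
    refine ⟨fun q p => le_trans (h.1 q p) (hle q p), h.2.1, fun i => ?_⟩
    obtain ⟨c, hc, hn⟩ := h.2.2 i
    refine ⟨c, hc, ih hn fun q p => ?_⟩
    have hQ : (0:ℝ) ≤ aF q := le_of_lt (aF_pos q)
    exact mul_le_mul_of_nonneg_left (hle q p) (mul_nonneg (le_trans zero_le_one hc) hQ)

lemma Nice.of_succ : ∀ {m f B}, Nice (m + 1) f B → Nice m f B := by
  intro m
  induction m with
  | zero => intro f B h; exact h.1
  | succ m ih =>
    intro f B h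
    exact ⟨h.1, h.2.1, fun i => (h.2.2 i).imp fun c hc => ⟨hc.1, ih hc.2⟩⟩

lemma Nice.add : ∀ {m f g B C}, Nice m f B → Nice m g C →
    Nice m (fun q p => f q p + g q p) (fun q p => B q p + C q p) := by
  intro m
  induction m with
  | zero =>
    intro f g B C hf hg q p
    exact le_trans (abs_add_le _ _) (add_le_add (hf q p) (hg q p))
  | succ m ih =>
    intro f g B C hf hg
    refine ⟨fun q p => le_trans (abs_add_le _ _) (add_le_add (hf.1 q p) (hg.1 q p)),
      fun q => (hf.2.1 q).add (hg.2.1 q), fun i => ?_⟩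
    obtain ⟨c1, hc1, h1⟩ := hf.2.2 i
    obtain ⟨c2, hc2, h2⟩ := hg.2.2 i
    refine ⟨c1 + c2, by linarith, ?_⟩
    have hsum := ih h1 h2
    have e : ∀ q p, pd i (f q) p + pd i (g q) p = pd i (fun x => f q x + g q x) p :=
      fun q p => (pd_add (hf.2.1 q p) (hg.2.1 q p)).symm
    refine (hsum.congr e).mono fun q p => ?_
    have hQ : (0:ℝ) ≤ aF q := le_of_lt (aF_pos q)
    have hB : (0:ℝ) ≤ B q p := (hf.of_succ).bnd_nonneg q p
    have hC : (0:ℝ) ≤ C q p := (hg.of_succ).bnd_nonneg q p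
    show c1 * aF q * B q p + c2 * aF q * C q p ≤ (c1 + c2) * aF q * (B q p + C q p)
    nlinarith [mul_nonneg (mul_nonneg (le_trans zero_le_one hc2) hQ) hB,
      mul_nonneg (mul_nonneg (le_trans zero_le_one hc1) hQ) hC]

lemma Nice.neg : ∀ {m f B}, Nice m f B → Nice m (fun q p => -f q p) B := by
  intro m
  induction m with
  | zero => intro f B h q p; rw [abs_neg]; exact h q p
  | succ m ih =>
    intro f B h
    refine ⟨fun q p => by rw [abs_neg]; exact h.1 q p, fun q => (h.2.1 q).neg, fun i => ?_⟩
    obtain ⟨c, hc, hn⟩ := h.2.2 i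
    exact ⟨c, hc, (ih hn).congr fun q p => (pd_neg).symm⟩

lemma Nice.sub {m f g B C} (hf : Nice m f B) (hg : Nice m g C) :
    Nice m (fun q p => f q p - g q p) (fun q p => B q p + C q p) :=
  (hf.add hg.neg).congr fun q p => by ring

lemma Nice.mul : ∀ {m f g B C}, Nice m f B → Nice m g C →
    Nice m (fun q p => f q p * g q p) (fun q p => B q p * C q p) := by
  intro m
  induction m with
  | zero =>
    intro f g B C hf hg q p
    rw [abs_mul]
    exact mul_le_mul (hf q p) (hg q p) (abs_nonneg _)
      (le_trans (abs_nonneg _) (hf q p))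
  | succ m ih =>
    intro f g B C hf hg
    refine ⟨fun q p => by
        rw [abs_mul]
        exact mul_le_mul (hf.1 q p) (hg.1 q p) (abs_nonneg _)
          (le_trans (abs_nonneg _) (hf.1 q p)),
      fun q => (hf.2.1 q).mul (hg.2.1 q), fun i => ?_⟩
    obtain ⟨c1, hc1, h1⟩ := hf.2.2 i
    obtain ⟨c2, hc2, h2⟩ := hg.2.2 i
    refine ⟨c1 + c2, by linarith, ?_⟩
    have t1 := ih h1 hg.of_succ
    have t2 := ih hf.of_succ h2
    have hsum := t2.add t1
    have e : ∀ q p, f q p * pd i (g q) p + pd i (f q) p * g q p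
        = pd i (fun x => f q x * g q x) p := fun q p => by
      rw [pd_mul (hf.2.1 q p) (hg.2.1 q p)]; ring
    refine (hsum.congr e).mono fun q p => le_of_eq (by ring)

lemma Nice.zero : ∀ (m : ℕ) (B), (∀ q p : Fin 3 → ℝ, 0 ≤ B q p) →
    Nice m (fun _ _ => (0:ℝ)) B := by
  intro m
  induction m with
  | zero => intro B hB q p; simpa using hB q p
  | succ m ih =>
    intro B hB
    refine ⟨fun q p => by simpa using hB q p, fun q => differentiable_const 0, fun i => ?_⟩
    refine ⟨1, le_refl 1, ?_⟩
    have := ih (fun q p => 1 * aF q * B q p) (fun q p => by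
      have := le_of_lt (aF_pos q); have := hB q p; positivity)
    exact this.congr fun q p => (pd_const 0).symm

lemma Nice.const (c : ℝ) : ∀ (m : ℕ), Nice m (fun _ _ => c) (fun _ _ => |c|)
  | 0 => fun q p => le_refl _
  | (m + 1) =>
    ⟨fun q p => le_refl _, fun q => differentiable_const c, fun i =>
      ⟨1, le_refl 1,
        (Nice.zero m _ (fun q p => by
          have := le_of_lt (aF_pos q); positivity)).congr
          fun q p => (pd_const c).symm⟩⟩

lemma Nice.iter (i : Fin 3) : ∀ (k : ℕ) {m f B}, Nice (m + k) f B →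
    ∃ c : ℝ, 1 ≤ c ∧ Nice m (fun q => (pd i)^[k] (f q))
      (fun q p => c * aF q ^ k * B q p) := by
  intro k
  induction k with
  | zero =>
    intro m f B h
    exact ⟨1, le_refl 1, h.mono fun q p => le_of_eq (by ring)⟩
  | succ k ihk =>
    intro m f B h
    obtain ⟨c1, hc1, h1⟩ := h.2.2 i
    obtain ⟨c2, hc2, h2⟩ := ihk h1
    refine ⟨c1 * c2, by nlinarith, ?_⟩
    refine (h2.congr fun q p => ?_).mono fun q p => le_of_eq (by rw [pow_succ]; ring)
    rw [Function.iterate_succ_apply]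


-- convenient abbreviations for the bound families
private def Bone : (Fin 3 → ℝ) → (Fin 3 → ℝ) → ℝ := fun _ _ => 1
private def Br : (Fin 3 → ℝ) → (Fin 3 → ℝ) → ℝ :=
  fun q p => Real.sqrt (aF q) * (Real.sqrt (aF p))⁻¹
private def Bm : (Fin 3 → ℝ) → (Fin 3 → ℝ) → ℝ := fun q _ => 2 * aF q
private def Bv : (Fin 3 → ℝ) → (Fin 3 → ℝ) → ℝ :=
  fun q p => 4 * (Real.sqrt (aF p) * Real.sqrt (aF q))
private def Bw : (Fin 3 → ℝ) → (Fin 3 → ℝ) → ℝ := fun q p => (EF q p)⁻¹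

lemma abs_ite_le (i j : Fin 3) : |if i = j then (1:ℝ) else 0| ≤ 1 := by
  split_ifs <;> simp

lemma gens : ∀ m : ℕ,
    (∀ i, Nice m (fun _ => uF i) Bone) ∧
    Nice m (fun _ => iaF) Bone ∧
    Nice m rF Br ∧
    Nice m MF Bm ∧
    (∀ i, Nice m (fun q => VF q i) Bv) ∧
    Nice m wF Bw := by
  intro m
  induction m with
  | zero =>
    refine ⟨fun i q p => abs_uF i p, fun q p => abs_iaF p, fun q p => abs_rF q p,
      fun q p => abs_MF q p, fun i q p => abs_VF q i p, fun q p => abs_wF q p⟩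
  | succ m IH =>
    obtain ⟨ihu, ihia, ihr, ihM, ihV, ihw⟩ := IH
    refine ⟨?_, ?_, ?_, ?_, ?_, ?_⟩
    -- uF
    · intro i
      refine ⟨fun q p => abs_uF i p, fun q => diff_uF i, fun j => ?_⟩
      refine ⟨2, by norm_num, ?_⟩
      have t1 := (Nice.const (if i = j then (1:ℝ) else 0) m).mul ihia
      have t2 := ((ihu i).mul (ihu j)).mul ihia
      refine ((t1.sub t2).congr fun q p => (pd_uF p i j).symm).mono fun q p => ?_
      show |if i = j then (1:ℝ) else 0| * Bone q p + Bone q p * Bone q p * Bone q p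
          ≤ 2 * aF q * Bone q p
      have h1 := abs_ite_le i j
      have h2 := one_le_aF q
      unfold Bone
      nlinarith
    -- iaF
    · refine ⟨fun q p => abs_iaF p, fun q => diff_iaF, fun j => ?_⟩
      refine ⟨1, le_refl 1, ?_⟩
      have t := ((ihu j).mul (ihia.mul ihia)).neg
      refine (t.congr fun q p => (pd_iaF p j).symm).mono fun q p => ?_
      show Bone q p * (Bone q p * Bone q p) ≤ 1 * aF q * Bone q p
      have h2 := one_le_aF q
      unfold Bone
      nlinarith
    -- rF
    · refine ⟨fun q p => abs_rF q p, fun q => diff_rF q, fun j => ?_⟩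
      refine ⟨4, by norm_num, ?_⟩
      have t := ((ihV j).mul (ihr.mul ihr)).neg
      refine (t.congr fun q p => (pd_rF q p j).symm).mono fun q p => le_of_eq ?_
      show Bv q p * (Br q p * Br q p) = 4 * aF q * Br q p
      unfold Bv Br
      have hx := sqa_pos p
      have hyy := sqa_sq q
      rw [← hyy]
      field_simp
      rw [Real.sqrt_sq (Real.sqrt_nonneg _)]
      ring
    -- MF
    · refine ⟨fun q p => abs_MF q p, fun q => diff_MF q, fun j => ?_⟩
      refine ⟨2, by norm_num, ?_⟩
      have t := ((ihu j).mul ihia).sub (ihM.mul ((ihu j).mul ihia))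
      refine (t.congr fun q p => (pd_MF q p j).symm).mono fun q p => ?_
      show Bone q p * Bone q p + Bm q p * (Bone q p * Bone q p) ≤ 2 * aF q * Bm q p
      have h2 := one_le_aF q
      unfold Bone Bm
      nlinarith
    -- VF
    · intro i
      refine ⟨fun q p => abs_VF q i p, fun q => diff_VF q i, fun j => ?_⟩
      refine ⟨6, by norm_num, ?_⟩
      have inner := (((ihu i).mul (ihu j)).add
        (ihM.mul ((Nice.const (if i = j then (1:ℝ) else 0) m).sub
          ((ihu i).mul (ihu j))))).sub (Nice.const (if i = j then (1:ℝ) else 0) m)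
      have t := (inner.mul ihr).sub ((ihV i).mul ((ihV j).mul ihr))
      refine (t.congr fun q p => (pd_VF q p i j).symm).mono fun q p => ?_
      show (Bone q p * Bone q p + Bm q p * (|if i = j then (1:ℝ) else 0| + Bone q p * Bone q p)
            + |if i = j then (1:ℝ) else 0|) * Br q p + Bv q p * (Bv q p * Br q p)
          ≤ 6 * aF q * Bv q p
      have hd := abs_ite_le i j
      have hd0 : (0:ℝ) ≤ |if i = j then (1:ℝ) else 0| := abs_nonneg _
      unfold Bone Bm Bv Br
      have hx := one_le_sqa p
      have hy := one_le_sqa q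
      have hx0 := sqa_pos p
      have hxx := sqa_sq p
      have hyy := sqa_sq q
      set x := Real.sqrt (aF p)
      set y := Real.sqrt (aF q)
      set d := |if i = j then (1:ℝ) else 0|
      have hu0 : (0:ℝ) ≤ x⁻¹ := le_of_lt (inv_pos.mpr hx0)
      have hu1 : x⁻¹ ≤ 1 := by
        rw [inv_le_one_iff₀]; right; exact hx
      have e2 : x * x * x⁻¹ = x := by field_simp
      have hy0 : (0:ℝ) ≤ y := by linarith
      have hx0' : (0:ℝ) ≤ x := by linarith
      have hyyy : (0:ℝ) ≤ y * (y * y) := mul_nonneg hy0 (mul_nonneg hy0 hy0)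
      rw [← hyy]
      nlinarith [mul_nonneg (mul_nonneg hu0 hy0) (mul_nonneg hy0 hy0),
        mul_nonneg hu0 hy0,
        mul_le_mul_of_nonneg_left hu1 hyyy,
        mul_le_mul_of_nonneg_left hu1 (mul_nonneg hd0 hy0),
        mul_le_mul_of_nonneg_left hu1 (mul_nonneg hd0 hyyy),
        mul_le_mul_of_nonneg_right (mul_le_mul_of_nonneg_left hu1 hyyy) hx0',
        e2, mul_nonneg hy0 hy0]
    -- wF
    · refine ⟨fun q p => abs_wF q p, fun q => diff_wF q, fun j => ?_⟩
      refine ⟨5, by norm_num, ?_⟩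
      have t := (((ihu j).add (ihV j)).mul (ihw.mul ihw)).neg
      refine (t.congr fun q p => (pd_wF q p j).symm).mono fun q p => ?_
      show (Bone q p + Bv q p) * (Bw q p * Bw q p) ≤ 5 * aF q * Bw q p
      unfold Bone Bv Bw
      have hx := one_le_sqa p
      have hy := one_le_sqa q
      have hxx := sqa_sq p
      have hyy := sqa_sq q
      have hE0 := EF_pos q p
      have hE2 := EF_ge_two q p
      have hEa := aF_le_EF q p
      set x := Real.sqrt (aF p)
      set y := Real.sqrt (aF q)
      set e := (EF q p)⁻¹ with he
      have he0 : (0:ℝ) ≤ e := le_of_lt (inv_pos.mpr hE0)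
      have heE : EF q p * e = 1 := mul_inv_cancel₀ (ne_of_gt hE0)
      have he2 : e ≤ 1/2 := by
        rw [he]
        rw [inv_le_comm₀ hE0 (by norm_num)]
        linarith
      have hxe : x * e ≤ 1 := by
        have hxE : x ≤ EF q p := by nlinarith
        calc x * e ≤ EF q p * e := mul_le_mul_of_nonneg_right hxE he0
          _ = 1 := heE
      rw [← hyy]
      nlinarith [mul_le_mul_of_nonneg_right hxe (mul_nonneg (by linarith : (0:ℝ) ≤ 4 * y) he0),
        mul_le_mul_of_nonneg_right he2 he0,
        mul_nonneg he0 he0,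
        mul_le_mul_of_nonneg_left he2 (by nlinarith : (0:ℝ) ≤ y * y)]

end MDAux

open MDAux in
/-- **Derivatives of `1/(n⁰+√s)`**: for every multi-index `A` with `|A| ≥ 1` there is
`C > 0` with `|∂^A_p [1/(n⁰+√s)]| ≤ C (q⁰)^{|A|} / (n⁰+√s)`, where `n⁰ = p⁰+q⁰`. -/
theorem multiDeriv_inv_energySum (A : Fin 3 → ℕ) (hA : 1 ≤ ∑ i, A i) :
    ∃ C > 0, ∀ p q : Fin 3 → ℝ,
      |multiDeriv A
          (fun x => (Real.sqrt (1 + x ⬝ᵥ x) + Real.sqrt (1 + q ⬝ᵥ q)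
              + Real.sqrt (sTot x q))⁻¹) p|
        ≤ C * Real.sqrt (1 + q ⬝ᵥ q) ^ (∑ i, A i)
            / (Real.sqrt (1 + p ⬝ᵥ p) + Real.sqrt (1 + q ⬝ᵥ q) + Real.sqrt (sTot p q)) := by
  have h := (gens (A 0 + A 1 + A 2)).2.2.2.2.2
  obtain ⟨c2, hc2, h2⟩ := Nice.iter 2 (A 2) h
  obtain ⟨c1, hc1, h1⟩ := Nice.iter 1 (A 1) h2
  have h1' : Nice (0 + A 0) (fun q => (pd 1)^[A 1] ((pd 2)^[A 2] (wF q)))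
      (fun q p => c1 * aF q ^ A 1 * (c2 * aF q ^ A 2 * MDAux.Bw q p)) := by
    rw [Nat.zero_add]; exact h1
  obtain ⟨c0, hc0, h0⟩ := Nice.iter 0 (A 0) h1'
  have hcc : (1:ℝ) ≤ c1 * c2 := by nlinarith
  have hccc : (1:ℝ) ≤ c0 * (c1 * c2) := by nlinarith
  refine ⟨c0 * (c1 * c2), lt_of_lt_of_le one_pos hccc, fun p q => ?_⟩
  have hb := h0.abs_le q p
  have hsum : ∑ i, A i = A 0 + A 1 + A 2 := Fin.sum_univ_three A
  have heq : multiDeriv A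
      (fun x => (Real.sqrt (1 + x ⬝ᵥ x) + Real.sqrt (1 + q ⬝ᵥ q)
          + Real.sqrt (sTot x q))⁻¹) p
      = (pd 0)^[A 0] ((pd 1)^[A 1] ((pd 2)^[A 2] (wF q))) p := rfl
  rw [heq, hsum]
  refine le_trans hb (le_of_eq ?_)
  show c0 * aF q ^ A 0 * (c1 * aF q ^ A 1 * (c2 * aF q ^ A 2 * (EF q p)⁻¹))
      = c0 * (c1 * c2) * aF q ^ (A 0 + A 1 + A 2) / EF q p
  rw [div_eq_mul_inv, pow_add, pow_add]
  ring

end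
end
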